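/- Let p ∈ ℝᵈ be a nonzero vector and let the quantizer Q̂ (consisting of adaptive normalization to [0,1] by the range of p, dithered uniform quantization with L levels scaled by 1/τ where τ = 1 + d/L², and de-normalization) be applied entrywise. Then E[‖Q̂(p) − p‖²] ≤ (1 − 1/τ)‖p‖², and Q̂(0) = 0. -/

import Mathlib

set_option maxHeartbeats 1000000

open MeasureTheory

/-- The dithered scalar quantizer with `L` levels and dither `u`. -/
noncomputable def zetaQ (L : ℕ) (x u : ℝ) : ℝ := (⌊x * L + u⌋ : ℝ) / L

/-- The full quantizer `Q̂` (adaptive normalization by the range, dithered uniform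
quantization with `L` levels scaled by `1/τ`, and de-normalization), applied entrywise. -/
noncomputable def Qhat (d L : ℕ) (τ m r : ℝ) (p : Fin d → ℝ) (u : Fin d → ℝ) :
    Fin d → ℝ :=
  fun i => (1 / τ) * (r * zetaQ L ((p i - m) / r) (u i) + m)

lemma coord_lemma (L : ℕ) (hL : 0 < L) (τ a m r : ℝ) (hτ : 1 < τ)
    (hra : r * ((a - m) / r) = a - m) :
    IntegrableOn (fun u => ((1/τ) * (r * zetaQ L ((a - m)/r) u + m) - a)^2)
        (Set.Ioo (0:ℝ) 1) volume ∧
    ∫ u in Set.Ioo (0:ℝ) 1, ((1/τ) * (r * zetaQ L ((a - m)/r) u + m) - a)^2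
      ≤ a^2*(1-1/τ)^2 + r^2/(4*(L:ℝ)^2*τ^2) := by
  have hL0 : (0:ℝ) < L := by exact_mod_cast hL
  have hτ0 : (0:ℝ) < τ := lt_trans one_pos hτ
  set x : ℝ := (a - m) / r with hx
  set y : ℝ := x * L with hy
  set n : ℤ := ⌊y⌋ with hn
  set t : ℝ := Int.fract y with ht
  have hyt : y = (n:ℝ) + t := by rw [hn, ht, Int.floor_add_fract]
  have ht0 : 0 ≤ t := Int.fract_nonneg y
  have ht1 : t < 1 := Int.fract_lt_one y
  set s : ℝ := 1 - t with hsdef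
  have hs0 : 0 < s := by simp [hsdef]; linarith
  have hs1 : s ≤ 1 := by simp [hsdef]; linarith
  set g : ℝ → ℝ := fun u => ((1/τ) * (r * zetaQ L x u + m) - a)^2 with hg
  set A : ℝ := ((1/τ) * (r * ((n:ℝ)/L) + m) - a)^2 with hA
  set B : ℝ := ((1/τ) * (r * (((n:ℝ)+1)/L) + m) - a)^2 with hB
  have hgA : Set.EqOn g (fun _ => A) (Set.Ioo 0 s) := by
    intro u hu
    have hfl : ⌊x * (L:ℝ) + u⌋ = n := by
      rw [Int.floor_eq_iff]
      constructor
      · have := Int.floor_le y; rw [← hy]; nlinarith [hu.1]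
      · rw [← hy]; push_cast; nlinarith [hu.2, hyt]
    simp only [hg, zetaQ, hfl, hA]
  have hgB : Set.EqOn g (fun _ => B) (Set.Ico s 1) := by
    intro u hu
    have hfl : ⌊x * (L:ℝ) + u⌋ = n + 1 := by
      rw [Int.floor_eq_iff]
      constructor
      · rw [← hy]; push_cast; nlinarith [hu.1, hyt]
      · rw [← hy]; push_cast; nlinarith [hu.2, hyt]
    simp only [hg, zetaQ, hfl, hB]; push_cast; ring_nf
  have hsplit : Set.Ioo (0:ℝ) 1 = Set.Ioo 0 s ∪ Set.Ico s 1 :=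
    (Set.Ioo_union_Ico_eq_Ioo hs0 hs1).symm
  have hdisj : Disjoint (Set.Ioo (0:ℝ) s) (Set.Ico s 1) :=
    Set.disjoint_left.mpr fun u hu hu' => absurd hu.2 (not_lt.mpr hu'.1)
  have hintA : IntegrableOn g (Set.Ioo (0:ℝ) s) volume :=
    (integrableOn_const measure_Ioo_lt_top.ne).congr_fun
      (fun u hu => (hgA hu).symm) measurableSet_Ioo
  have hintB : IntegrableOn g (Set.Ico (s:ℝ) 1) volume :=
    (integrableOn_const measure_Ico_lt_top.ne).congr_fun
      (fun u hu => (hgB hu).symm) measurableSet_Ico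
  have hint : IntegrableOn g (Set.Ioo (0:ℝ) 1) volume := by
    rw [hsplit]; exact hintA.union hintB
  refine ⟨hint, ?_⟩
  have hIA : ∫ u in Set.Ioo (0:ℝ) s, g u = s * A := by
    rw [setIntegral_congr_fun measurableSet_Ioo hgA, setIntegral_const,
      Real.volume_real_Ioo_of_le hs0.le, smul_eq_mul, sub_zero]
  have hIB : ∫ u in Set.Ico (s:ℝ) 1, g u = (1 - s) * B := by
    rw [setIntegral_congr_fun measurableSet_Ico hgB, setIntegral_const,
      Real.volume_real_Ico_of_le hs1, smul_eq_mul]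
  have hI : ∫ u in Set.Ioo (0:ℝ) 1, g u = (1 - t) * A + t * B := by
    rw [hsplit, setIntegral_union hdisj measurableSet_Ico hintA hintB, hIA, hIB]
    rw [hsdef]; ring
  rw [hI]
  have hkey : r * ((n:ℝ) + t) = (a - m) * L := by
    rw [← hyt, hy, hx, ← mul_assoc, hra]
  set P : ℝ := r * n + (m - τ*a) * L with hP
  have hPt : P + t * r = a * (1 - τ) * L := by rw [hP]; linear_combination hkey
  have hA' : A = P^2 / (τ*L)^2 := by rw [hA, hP]; field_simp; ring
  have hB' : B = (P + r)^2 / (τ*L)^2 := by rw [hB, hP]; field_simp; ring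
  have hRHS : a^2*(1-1/τ)^2 + r^2/(4*(L:ℝ)^2*τ^2) = ((P + t*r)^2 + r^2/4) / (τ*L)^2 := by
    rw [hPt]; field_simp; ring
  rw [hA', hB', hRHS]
  have h1 : (1 - t) * (P ^ 2 / (τ * (L:ℝ)) ^ 2) + t * ((P + r) ^ 2 / (τ * (L:ℝ)) ^ 2)
      = ((1-t)*P^2 + t*(P+r)^2)/(τ*(L:ℝ))^2 := by ring
  rw [h1, div_le_div_iff_of_pos_right (by positivity)]
  nlinarith [sq_nonneg ((2*t-1)*r)]

lemma prob_unif : IsProbabilityMeasure ((volume : Measure ℝ).restrict (Set.Ioo 0 1)) :=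
  ⟨by simp⟩

lemma restrict_cube (d : ℕ) :
    (volume : Measure (Fin d → ℝ)).restrict (Set.univ.pi fun _ => Set.Ioo (0:ℝ) 1)
      = Measure.pi (fun _ : Fin d => (volume : Measure ℝ).restrict (Set.Ioo 0 1)) := by
  haveI : IsProbabilityMeasure ((volume : Measure ℝ).restrict (Set.Ioo 0 1)) := prob_unif
  refine (Measure.pi_eq (μ := fun _ : Fin d => (volume : Measure ℝ).restrict (Set.Ioo 0 1))
    (fun s hs => ?_)).symm
  rw [Measure.restrict_apply (MeasurableSet.univ_pi hs), ← Set.pi_inter_distrib]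
  rw [volume_pi, Measure.pi_pi]
  exact Finset.prod_congr rfl fun i _ =>
    (Measure.restrict_apply (hs i)).symm

lemma eval_mp (d : ℕ) (i : Fin d) :
    MeasurePreserving (fun u : Fin d → ℝ => u i)
      (Measure.pi (fun _ : Fin d => (volume : Measure ℝ).restrict (Set.Ioo 0 1)))
      ((volume : Measure ℝ).restrict (Set.Ioo 0 1)) := by
  haveI : IsProbabilityMeasure ((volume : Measure ℝ).restrict (Set.Ioo 0 1)) := prob_unif
  refine ⟨measurable_pi_apply i, ?_⟩
  refine Measure.ext fun s hs => ?_
  rw [Measure.map_apply (measurable_pi_apply i) hs, ← Set.univ_pi_update_univ,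
    Measure.pi_pi]
  simp [Function.update_apply, apply_ite ((volume : Measure ℝ).restrict (Set.Ioo 0 1)),
    Finset.prod_ite_eq' Finset.univ i]

/-- Compression error bound of the quantizer: `E[‖Q̂(p) − p‖²] ≤ (1 − 1/τ)‖p‖²`
with `τ = 1 + d/L²`, and `Q̂(0) = 0`. The expectation is over the i.i.d. uniform
dithers `u ∈ [0,1]^d`. -/
theorem qhat_compression_bound (d L : ℕ) (hd : 0 < d) (hL : 0 < L)
    (p : Fin d → ℝ) (hp : p ≠ 0) (τ m M r : ℝ)
    (hτ : τ = 1 + (d : ℝ) / (L : ℝ) ^ 2)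
    (hm : IsLeast (Set.range p) m) (hM : IsGreatest (Set.range p) M)
    (hr : r = M - m) :
    (∫ u in Set.univ.pi (fun _ : Fin d => Set.Ioo (0 : ℝ) 1),
        ∑ i, (Qhat d L τ m r p u i - p i) ^ 2) ≤ (1 - 1 / τ) * ∑ i, (p i) ^ 2
      ∧ ∀ u : Fin d → ℝ, Qhat d L τ 0 0 (0 : Fin d → ℝ) u = 0 := by
  constructor
  · have hL0 : (0:ℝ) < L := by exact_mod_cast hL
    have hd0 : (0:ℝ) < d := by exact_mod_cast hd
    have hτ1 : 1 < τ := by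
      rw [hτ]; nlinarith [div_pos hd0 (pow_pos hL0 2)]
    have hτ0 : (0:ℝ) < τ := lt_trans one_pos hτ1
    have hpm : ∀ i, m ≤ p i := fun i => hm.2 ⟨i, rfl⟩
    have hpM : ∀ i, p i ≤ M := fun i => hM.2 ⟨i, rfl⟩
    have hra : ∀ i, r * ((p i - m)/r) = p i - m := by
      intro i
      rcases eq_or_ne r 0 with h0 | h0
      · have hMm : M = m := by rw [hr] at h0; linarith [sub_eq_zero.mp h0]
        have : p i = m := le_antisymm (hMm ▸ hpM i) (hpm i)
        simp [h0, this]
      · exact mul_div_cancel₀ _ h0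
    have key := fun i => coord_lemma L hL τ (p i) m r hτ1 (hra i)
    haveI : IsProbabilityMeasure ((volume : Measure ℝ).restrict (Set.Ioo 0 1)) := prob_unif
    set ν : Measure ℝ := (volume : Measure ℝ).restrict (Set.Ioo 0 1) with hν
    set g : Fin d → ℝ → ℝ :=
      fun i v => ((1/τ) * (r * zetaQ L ((p i - m)/r) v + m) - p i)^2 with hgdef
    have hgmeas : ∀ i, Measurable (g i) := by
      intro i
      apply Measurable.pow_const
      apply Measurable.sub _ measurable_const
      apply Measurable.const_mul
      apply Measurable.add_const
      apply Measurable.const_mul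
      unfold zetaQ
      exact (measurable_from_top.comp ((measurable_const.add measurable_id).floor)).div_const _
    have hgoal : (∫ u in Set.univ.pi (fun _ : Fin d => Set.Ioo (0 : ℝ) 1),
        ∑ i, (Qhat d L τ m r p u i - p i) ^ 2)
        = ∑ i, ∫ v, g i v ∂ν := by
      have h1 : (∫ u in Set.univ.pi (fun _ : Fin d => Set.Ioo (0 : ℝ) 1),
          ∑ i, (Qhat d L τ m r p u i - p i) ^ 2)
          = ∫ u, ∑ i, g i (u i) ∂(Measure.pi (fun _ : Fin d => ν)) := by
        rw [← restrict_cube d]; rfl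
      rw [h1, integral_finset_sum]
      · refine Finset.sum_congr rfl fun i _ => ?_
        show (∫ a, g i (a i) ∂Measure.pi fun _ : Fin d => (volume : Measure ℝ).restrict (Set.Ioo 0 1))
          = ∫ v, g i v ∂((volume : Measure ℝ).restrict (Set.Ioo 0 1))
        have e1 : ∫ v, g i v
              ∂((Measure.pi fun _ : Fin d =>
                  (volume : Measure ℝ).restrict (Set.Ioo 0 1)).map (fun u => u i))
            = ∫ a, g i (a i)
              ∂(Measure.pi fun _ : Fin d => (volume : Measure ℝ).restrict (Set.Ioo 0 1)) :=
          integral_map (measurable_pi_apply i).aemeasurable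
            ((hgmeas i).aestronglyMeasurable)
        rw [(eval_mp d i).map_eq] at e1
        exact e1.symm
      · intro i _
        exact ((eval_mp d i).integrable_comp (hgmeas i).aestronglyMeasurable).mpr (key i).1
    rw [hgoal]
    have hsum : ∑ i, ∫ v, g i v ∂ν
        ≤ ∑ i, ((p i)^2*(1-1/τ)^2 + r^2/(4*(L:ℝ)^2*τ^2)) :=
      Finset.sum_le_sum fun i _ => (key i).2
    refine le_trans hsum ?_
    rw [Finset.sum_add_distrib, Finset.sum_const, ← Finset.sum_mul, Finset.card_univ,
      Fintype.card_fin]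
    set S : ℝ := ∑ i, (p i)^2 with hS
    have hS0 : 0 ≤ S := Finset.sum_nonneg fun i _ => sq_nonneg _
    obtain ⟨j, hj⟩ := hM.1
    obtain ⟨k, hk⟩ := hm.1
    have hM2 : M^2 ≤ S := hj ▸ Finset.single_le_sum (f := fun i => (p i)^2)
      (fun i _ => sq_nonneg _) (Finset.mem_univ j)
    have hm2 : m^2 ≤ S := hk ▸ Finset.single_le_sum (f := fun i => (p i)^2)
      (fun i _ => sq_nonneg _) (Finset.mem_univ k)
    have hr2 : r^2 ≤ 4*S := by rw [hr]; nlinarith [sq_nonneg (M + m)]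
    have hd' : (d:ℝ) = (τ-1)*(L:ℝ)^2 := by rw [hτ]; field_simp; ring
    rw [nsmul_eq_mul, hd']
    have h2 : (τ-1)*(L:ℝ)^2 * (r^2/(4*(L:ℝ)^2*τ^2)) = (τ-1)*r^2/(4*τ^2) := by
      field_simp
    rw [h2]
    have h3 : (1-1/τ)*S - (S*(1-1/τ)^2 + (τ-1)*r^2/(4*τ^2))
        = (τ-1)*(4*S-r^2)/(4*τ^2) := by field_simp; ring
    have h4 : 0 ≤ (τ-1)*(4*S-r^2)/(4*τ^2) :=
      div_nonneg (mul_nonneg (by linarith) (by linarith)) (by positivity)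
    linarith
  · intro u
    funext i
    simp [Qhat]
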